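/- Let $\mathfrak{g} = \mathfrak{h} \oplus \mathfrak{m}$ be a reductive decomposition satisfying the GO-property with respect to an $\operatorname{ad}(\mathfrak{h})$-invariant inner product $(\cdot,\cdot)$ on $\mathfrak{m}$. Let $\mathfrak{p} \subseteq \mathfrak{m}$ generate a subalgebra $\mathfrak{k} = \mathfrak{h}' \oplus \mathfrak{p}$ with $\mathfrak{h}' \subseteq \mathfrak{h}$, and suppose $\mathfrak{h}' + C_{\mathfrak{h}}(\mathfrak{p}) = \mathfrak{h}$, where $C_{\mathfrak{h}}(\mathfrak{p})$ is the centralizer of $\mathfrak{p}$ in $\mathfrak{h}$. Then for every $X \in \mathfrak{p}$ there exists $Z \in \mathfrak{h}'$ such that $([X+Z, Y]_{\mathfrak{p}}, X) = 0$ for all $Y \in \mathfrak{p}$; i.e., the subalgebra $\mathfrak{k}$ inherits the GO-property. -/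
import Mathlib


/-- Let `𝔤 = 𝔥 ⊕ 𝔪` satisfy the GO-property, let `𝔭 ⊆ 𝔪` generate a subalgebra
`𝔨 = 𝔥' ⊕ 𝔭` with `𝔥' ⊆ 𝔥`, and assume `𝔥' + C_𝔥(𝔭) = 𝔥`. Then for every `X ∈ 𝔭` there is
`Z ∈ 𝔥'` with `([X+Z,Y]_𝔭, X) = 0` for all `Y ∈ 𝔭`: the subalgebra `𝔨` inherits the
GO-property. -/
theorem go_property_inherited_by_subalgebra
    (L : Type*) [LieRing L] [LieAlgebra ℝ L] [FiniteDimensional ℝ L]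
    (h : LieSubalgebra ℝ L) (m : Submodule ℝ L)
    (hcompl : IsCompl h.toSubmodule m)
    (hadm : ∀ Z ∈ h, ∀ x ∈ m, ⁅Z, x⁆ ∈ m)
    (Φ : LinearMap.BilinForm ℝ L)
    (hΦsymm : ∀ x y : L, Φ x y = Φ y x)
    (hΦpos : ∀ x ∈ m, x ≠ 0 → 0 < Φ x x)
    (hΦinv : ∀ Z ∈ h, ∀ x ∈ m, ∀ y ∈ m, Φ ⁅Z, x⁆ y + Φ x ⁅Z, y⁆ = 0)
    (πm : L →ₗ[ℝ] L)
    (hπmem : ∀ x : L, πm x ∈ m) (hπid : ∀ x ∈ m, πm x = x) (hπh : ∀ x ∈ h, πm x = 0)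
    (hGO : ∀ X ∈ m, ∃ Z ∈ h, ∀ Y ∈ m, Φ (πm ⁅X + Z, Y⁆) X = 0)
    -- `𝔭` generates the subalgebra `𝔨 = 𝔥' ⊕ 𝔭`, `𝔥' ⊆ 𝔥`
    (p : Submodule ℝ L) (hpm : p ≤ m)
    (h' : LieSubalgebra ℝ L) (hh'h : h'.toSubmodule ≤ h.toSubmodule)
    (hk : ∀ X ∈ p, ∀ Y ∈ p, ⁅X, Y⁆ ∈ p ⊔ h'.toSubmodule)
    (hph' : ∀ Z ∈ h', ∀ x ∈ p, ⁅Z, x⁆ ∈ p)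
    -- `𝔥' + C_𝔥(𝔭) = 𝔥`
    (hcent : ∀ W ∈ h, ∃ Z' ∈ h', ∃ U ∈ h, (∀ x ∈ p, ⁅U, x⁆ = 0) ∧ W = Z' + U) :
    ∀ X ∈ p, ∃ Z ∈ h', ∀ Y ∈ p, Φ (πm ⁅X + Z, Y⁆) X = 0 := by
  intro X hX
  obtain ⟨W, hW, hGOW⟩ := hGO X (hpm hX)
  obtain ⟨Z', hZ', U, hU, hUcent, hWeq⟩ := hcent W hW
  refine ⟨Z', hZ', fun Y hY => ?_⟩
  have key : ⁅X + Z', Y⁆ = ⁅X + W, Y⁆ := by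
    rw [hWeq]; simp [add_lie, hUcent Y hY]
  rw [key]
  exact hGOW Y (hpm hY)
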